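/- Let g_k, h_k ≥ 0 satisfy g_k ≤ (n/(ν γ_k))(h_k − h_{k+1}) + γ_k C/2 for k = 0,...,K with γ_k = 2n/(νk+2n) and h_k ≤ 2nC/(νk+2n). Then with weights ρ_k = 2k/(K(K+1)) for K ≥ 1, the weighted average satisfies Σ_{k=0}^K ρ_k g_k ≤ 6nC/(ν(K+1)). Consequently, there exists some k̂ ≤ K with g_{k̂} ≤ 6nC/(ν(K+1)). -/

import Mathlib

set_option maxHeartbeats 1000000 in
/-- Primal-dual convergence via weighted averaging: if
`g_k ≤ (n/(ν γ_k))(h_k − h_{k+1}) + γ_k C/2` with `γ_k = 2n/(νk+2n)` and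
`h_k ≤ 2nC/(νk+2n)`, then the weights `ρ_k = 2k/(K(K+1))` give
`Σ_{k=0}^K ρ_k g_k ≤ 6nC/(ν(K+1))`, and hence some iterate `k̂ ≤ K` has
`g_{k̂} ≤ 6nC/(ν(K+1))`. -/
theorem weighted_average_gap_bound (n : ℕ) (hn : 1 ≤ n) (ν C : ℝ)
    (hν : ν ∈ Set.Ioc (0 : ℝ) 1) (hC : 0 < C) (K : ℕ) (hK : 1 ≤ K)
    (g h : ℕ → ℝ) (hgpos : ∀ k, 0 ≤ g k) (hhpos : ∀ k, 0 ≤ h k)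
    (γ : ℕ → ℝ) (hγ : ∀ k : ℕ, γ k = 2 * n / (ν * k + 2 * n))
    (hgap : ∀ k ≤ K, g k ≤ (n / (ν * γ k)) * (h k - h (k + 1)) + γ k * C / 2)
    (hh : ∀ k ≤ K + 1, h k ≤ 2 * n * C / (ν * k + 2 * n))
    (ρ : ℕ → ℝ) (hρ : ∀ k : ℕ, ρ k = 2 * k / (K * (K + 1))) :
    (∑ k ∈ Finset.range (K + 1), ρ k * g k) ≤ 6 * n * C / (ν * (K + 1)) ∧
      ∃ khat ≤ K, g khat ≤ 6 * n * C / (ν * (K + 1)) := by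
  obtain ⟨hν0, hν1⟩ := hν
  have hn0 : (0:ℝ) < n := by exact_mod_cast hn
  have hK0 : (0:ℝ) < K := by exact_mod_cast hK
  have hK1 : (0:ℝ) < (K:ℝ) + 1 := by positivity
  obtain ⟨D, hD⟩ : ∃ D : ℝ, D = ν * K * (K + 1) := ⟨_, rfl⟩
  have hDpos : 0 < D := by rw [hD]; positivity
  obtain ⟨a, ha⟩ : ∃ a : ℕ → ℝ, a = fun k : ℕ => (k : ℝ) * (ν * k + 2 * n) / D := ⟨_, rfl⟩
  have hden : ∀ k : ℕ, (0:ℝ) < ν * k + 2 * n := fun k => by positivity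
  have hanonneg : ∀ k, 0 ≤ a k := fun k => by
    simp only [ha]
    have := hden k
    positivity
  -- Step 1 : termwise bound
  have step1 : ∀ k ∈ Finset.range (K + 1),
      ρ k * g k ≤ (a k * h k - a k * h (k + 1)) + ρ k * γ k * C / 2 := by
    intro k hk
    rw [Finset.mem_range] at hk
    have hk' : k ≤ K := Nat.lt_succ_iff.mp hk
    have hρk : 0 ≤ ρ k := by rw [hρ]; positivity
    have h1 := mul_le_mul_of_nonneg_left (hgap k hk') hρk
    have h2 : ρ k * ((n / (ν * γ k)) * (h k - h (k + 1)) + γ k * C / 2)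
        = (a k * h k - a k * h (k + 1)) + ρ k * γ k * C / 2 := by
      rw [hρ, hγ]
      simp only [ha, hD]
      have hd := hden k
      have h1' : ((K:ℝ)) ≠ 0 := hK0.ne'
      have h2' : ((K:ℝ) + 1) ≠ 0 := hK1.ne'
      field_simp
    linarith [h1, h2.symm.le]
  -- Step 2 : telescoping bound via induction
  have key : ∀ m, m ≤ K →
      (∑ k ∈ Finset.range (m + 1), (a k * h k - a k * h (k + 1)))
        + a m * h (m + 1) ≤ m * (4 * n * C / D) := by
    intro m hm
    induction m with
    | zero => simp [ha]
    | succ m ih =>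
      have hm' : m ≤ K := le_of_lt (lt_of_lt_of_le (Nat.lt_succ_self m) hm)
      have ih' := ih hm'
      rw [Finset.sum_range_succ]
      have e1 : a (m + 1) - a m = (ν * (2 * m + 1) + 2 * n) / D := by
        simp only [ha]
        push_cast
        field_simp
        ring
      have e1n : 0 ≤ a (m + 1) - a m := by
        rw [e1]; positivity
      have hb := hh (m + 1) (by omega)
      push_cast at hb
      have h3 : (a (m + 1) - a m) * h (m + 1)
          ≤ (a (m + 1) - a m) * (2 * n * C / (ν * (m + 1) + 2 * n)) :=
        mul_le_mul_of_nonneg_left hb e1n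
      have h4 : (a (m + 1) - a m) * (2 * n * C / (ν * (m + 1) + 2 * n))
          ≤ 4 * n * C / D := by
        rw [e1, div_mul_div_comm, div_le_div_iff₀ (by positivity) hDpos]
        push_cast
        nlinarith [mul_pos hDpos (mul_pos hn0 hC), mul_pos (mul_pos hDpos hC) (mul_pos hn0 hn0)]
      push_cast
      push_cast at ih'
      nlinarith [h3, h4, ih']
  have key2 : (∑ k ∈ Finset.range (K + 1), (a k * h k - a k * h (k + 1)))
      ≤ 4 * n * C / (ν * (K + 1)) := by
    have h5 := key K le_rfl
    have h6 : 0 ≤ a K * h (K + 1) := mul_nonneg (hanonneg K) (hhpos (K + 1))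
    have h7 : (K:ℝ) * (4 * n * C / D) = 4 * n * C / (ν * (K + 1)) := by
      rw [hD]; field_simp
    linarith
  -- Step 3 : second sum
  have step3 : ∀ k : ℕ, ρ (k + 1) * γ (k + 1) * C / 2 ≤ 2 * n * C / D := by
    intro k
    rw [hρ, hγ]
    have hd := hden (k + 1)
    have e2 : 2 * ((k:ℝ) + 1) / (K * (K + 1)) * (2 * n / (ν * (k + 1) + 2 * n)) * C / 2
        = (2 * ((k:ℝ) + 1) * n * C) / (K * (K + 1) * (ν * (k + 1) + 2 * n)) := by
      field_simp
    push_cast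
    rw [e2, div_le_div_iff₀ (by positivity) hDpos, hD]
    nlinarith [mul_pos (mul_pos (mul_pos hn0 hn0) hC) (mul_pos hK0 hK1)]
  have key3 : (∑ k ∈ Finset.range (K + 1), ρ k * γ k * C / 2)
      ≤ 2 * n * C / (ν * (K + 1)) := by
    rw [Finset.sum_range_succ']
    have h0 : ρ 0 * γ 0 * C / 2 = 0 := by
      rw [hρ]; push_cast; ring
    have h8 : (∑ k ∈ Finset.range K, ρ (k + 1) * γ (k + 1) * C / 2)
        ≤ K * (2 * n * C / D) := by
      calc (∑ k ∈ Finset.range K, ρ (k + 1) * γ (k + 1) * C / 2)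
          ≤ ∑ _k ∈ Finset.range K, 2 * n * C / D :=
            Finset.sum_le_sum fun k _ => step3 k
        _ = K * (2 * n * C / D) := by
            rw [Finset.sum_const, Finset.card_range, nsmul_eq_mul]
    have h9 : (K:ℝ) * (2 * n * C / D) = 2 * n * C / (ν * (K + 1)) := by
      rw [hD]; field_simp
    linarith
  -- combine
  have main : (∑ k ∈ Finset.range (K + 1), ρ k * g k) ≤ 6 * n * C / (ν * (K + 1)) := by
    have h10 : (∑ k ∈ Finset.range (K + 1), ρ k * g k)
        ≤ ∑ k ∈ Finset.range (K + 1),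
            ((a k * h k - a k * h (k + 1)) + ρ k * γ k * C / 2) :=
      Finset.sum_le_sum step1
    rw [Finset.sum_add_distrib] at h10
    have h11 : (4:ℝ) * n * C / (ν * (K + 1)) + 2 * n * C / (ν * (K + 1))
        = 6 * n * C / (ν * (K + 1)) := by ring
    linarith
  refine ⟨main, ?_⟩
  by_contra hcon
  push_neg at hcon
  have hρsum : (∑ k ∈ Finset.range (K + 1), ρ k) = 1 := by
    have hgauss : (∑ k ∈ Finset.range (K + 1), (k:ℝ)) = K * (K + 1) / 2 := by
      have hnat : (∑ i ∈ Finset.range (K + 1), i) * 2 = (K + 1) * K := by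
        simpa using Finset.sum_range_id_mul_two (K + 1)
      have h' := congrArg (fun x : ℕ => (x:ℝ)) hnat
      push_cast at h'
      linarith
    simp only [hρ]
    rw [← Finset.sum_div, ← Finset.mul_sum, hgauss]
    field_simp
  have hlt : (∑ k ∈ Finset.range (K + 1), ρ k) * (6 * n * C / (ν * (K + 1)))
      < ∑ k ∈ Finset.range (K + 1), ρ k * g k := by
    rw [Finset.sum_mul]
    apply Finset.sum_lt_sum
    · intro i hi
      rw [Finset.mem_range] at hi
      have hρi : 0 ≤ ρ i := by rw [hρ]; positivity
      exact mul_le_mul_of_nonneg_left (hcon i (Nat.lt_succ_iff.mp hi)).le hρi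
    · refine ⟨K, Finset.self_mem_range_succ K, ?_⟩
      have hρK : 0 < ρ K := by
        rw [hρ]; positivity
      exact mul_lt_mul_of_pos_left (hcon K le_rfl) hρK
  rw [hρsum, one_mul] at hlt
  linarith
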